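/- In a finite MDP with discount γ ∈ (0,1), differentiable positive policy π_θ, and objective J(θ) := V^{π_θ}(s₀), the policy gradient identity holds: ∇_θ J(θ) = ∑_s ρ^{π_θ}(s) ∑_a ∇_θ π_θ(a|s) Q^{π_θ}(s, a), where ρ^{π_θ}(s) := ∑_{k=0}^∞ γᵏ P(s₀ → s, k, π_θ) is the discounted state visitation measure. -/

import Mathlib

open Finset

section SingleAgent

variable {S A : Type*} [Fintype S] [Fintype A] [DecidableEq S]

/-- One-step state-distribution update under policy and transition kernel. -/
def sStep (π : S → A → ℝ) (P : S → A → S → ℝ) (d : S → ℝ) : S → ℝ :=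
  fun s' => ∑ s, ∑ a, d s * π s a * P s a s'

/-- Expected one-step reward under a state distribution. -/
def sExpR (π : S → A → ℝ) (R : S → A → ℝ) (d : S → ℝ) : ℝ :=
  ∑ s, ∑ a, d s * π s a * R s a

/-- Point-mass distribution at a state. -/
def sDelta (s : S) : S → ℝ := fun s' => if s' = s then 1 else 0

/-- Value function `V(s) = E[∑ γ^t R_t | s₀ = s]`. -/
noncomputable def sV (π : S → A → ℝ) (P : S → A → S → ℝ) (R : S → A → ℝ) (γ : ℝ)
    (s : S) : ℝ :=
  ∑' k : ℕ, γ ^ k * sExpR π R ((sStep π P)^[k] (sDelta s))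

/-- Action-value function `Q(s,a) = E[∑ γ^t R_t | s₀ = s, a₀ = a]`. -/
noncomputable def sQ (π : S → A → ℝ) (P : S → A → S → ℝ) (R : S → A → ℝ) (γ : ℝ)
    (s : S) (a : A) : ℝ :=
  R s a + ∑' k : ℕ, γ ^ (k + 1) * sExpR π R ((sStep π P)^[k] (P s a))

/-- Discounted state visitation measure `ρ^π(s) = ∑_k γ^k P(s₀ → s, k, π)`. -/
noncomputable def sRho (π : S → A → ℝ) (P : S → A → S → ℝ) (γ : ℝ) (s₀ s : S) : ℝ :=
  ∑' k : ℕ, γ ^ k * ((sStep π P)^[k] (sDelta s₀)) s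

set_option linter.unusedSectionVars false

namespace PGAux

attribute [local instance] Matrix.linftyOpNormedRing Matrix.linftyOpNormedAlgebra

def Wmat (π : S → A → ℝ) (P : S → A → S → ℝ) : Matrix S S ℝ :=
  Matrix.of fun s s' => ∑ a, π s a * P s a s'

def rvec (π : S → A → ℝ) (R : S → A → ℝ) : S → ℝ := fun s => ∑ a, π s a * R s a

theorem Wmat_row_sum (π : S → A → ℝ) (P : S → A → S → ℝ)
    (hP1 : ∀ s a, ∑ s', P s a s' = 1) (hsum : ∀ s, ∑ a, π s a = 1) (s : S) :
    ∑ s', Wmat π P s s' = 1 := by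
  simp only [Wmat, Matrix.of_apply]
  rw [Finset.sum_comm]
  calc ∑ a, ∑ s', π s a * P s a s' = ∑ a : A, π s a * 1 := by
        refine Finset.sum_congr rfl fun a _ => ?_
        rw [← Finset.mul_sum, hP1 s a]
      _ = 1 := by simp [hsum s]

theorem norm_Wmat_le (π : S → A → ℝ) (P : S → A → S → ℝ)
    (hP0 : ∀ s a s', 0 ≤ P s a s') (hP1 : ∀ s a, ∑ s', P s a s' = 1)
    (hpos : ∀ s a, 0 < π s a) (hsum : ∀ s, ∑ a, π s a = 1) :
    ‖Wmat π P‖ ≤ 1 := by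
  have h : ‖Wmat π P‖₊ ≤ 1 := by
    rw [Matrix.linfty_opNNNorm_def]
    apply Finset.sup_le
    intro s _
    have : ((∑ s', ‖Wmat π P s s'‖₊ : NNReal) : ℝ) ≤ ((1 : NNReal) : ℝ) := by
      push_cast
      have hnn : ∀ s', 0 ≤ Wmat π P s s' :=
        fun s' => Finset.sum_nonneg fun a _ => mul_nonneg (hpos s a).le (hP0 s a s')
      rw [Finset.sum_congr rfl fun s' _ => Real.norm_of_nonneg (hnn s'),
        Wmat_row_sum π P hP1 hsum s]
    exact_mod_cast this
  exact_mod_cast h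

theorem norm_smul_Wmat_lt (π : S → A → ℝ) (P : S → A → S → ℝ) {γ : ℝ}
    (hγ0 : 0 < γ) (hγ1 : γ < 1)
    (hP0 : ∀ s a s', 0 ≤ P s a s') (hP1 : ∀ s a, ∑ s', P s a s' = 1)
    (hpos : ∀ s a, 0 < π s a) (hsum : ∀ s, ∑ a, π s a = 1) :
    ‖γ • Wmat π P‖ < 1 := by
  rw [norm_smul, Real.norm_of_nonneg hγ0.le]
  calc γ * ‖Wmat π P‖ ≤ γ * 1 :=
        mul_le_mul_of_nonneg_left (norm_Wmat_le π P hP0 hP1 hpos hsum) hγ0.le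
    _ < 1 := by linarith

theorem sStep_iterate (π : S → A → ℝ) (P : S → A → S → ℝ) (d : S → ℝ) (k : ℕ) :
    (sStep π P)^[k] d = fun s' => ∑ t, d t * (Wmat π P ^ k) t s' := by
  induction k with
  | zero =>
    funext s'
    simp [Matrix.one_apply, mul_ite]
  | succ k ih =>
    rw [Function.iterate_succ_apply', ih]
    funext s'
    show ∑ s, ∑ a, (∑ t, d t * (Wmat π P ^ k) t s) * π s a * P s a s'
        = ∑ t, d t * (Wmat π P ^ (k + 1)) t s'
    calc ∑ s, ∑ a, (∑ t, d t * (Wmat π P ^ k) t s) * π s a * P s a s'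
        = ∑ s, (∑ t, d t * (Wmat π P ^ k) t s) * Wmat π P s s' := by
          refine Finset.sum_congr rfl fun s _ => ?_
          rw [Wmat, Matrix.of_apply, Finset.mul_sum]
          exact Finset.sum_congr rfl fun a _ => by ring
      _ = ∑ s, ∑ t, d t * ((Wmat π P ^ k) t s * Wmat π P s s') := by
          refine Finset.sum_congr rfl fun s _ => ?_
          rw [Finset.sum_mul]
          exact Finset.sum_congr rfl fun t _ => by ring
      _ = ∑ t, ∑ s, d t * ((Wmat π P ^ k) t s * Wmat π P s s') := Finset.sum_comm
      _ = ∑ t, d t * (Wmat π P ^ (k + 1)) t s' := by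
          refine Finset.sum_congr rfl fun t _ => ?_
          rw [← Finset.mul_sum, pow_succ, Matrix.mul_apply]

theorem sExpR_eq (π : S → A → ℝ) (R : S → A → ℝ) (d : S → ℝ) :
    sExpR π R d = ∑ t, d t * rvec π R t := by
  unfold sExpR rvec
  refine Finset.sum_congr rfl fun t _ => ?_
  rw [Finset.mul_sum]
  exact Finset.sum_congr rfl fun a _ => by ring


noncomputable def φ (d r : S → ℝ) : Matrix S S ℝ →L[ℝ] ℝ :=
  LinearMap.toContinuousLinearMap
  { toFun := fun M => ∑ t, ∑ u, d t * M t u * r u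
    map_add' := fun x y => by
      simp only [Matrix.add_apply]
      rw [← Finset.sum_add_distrib]
      refine Finset.sum_congr rfl fun t _ => ?_
      rw [← Finset.sum_add_distrib]
      exact Finset.sum_congr rfl fun u _ => by ring
    map_smul' := fun c x => by
      simp only [Matrix.smul_apply, smul_eq_mul, RingHom.id_apply]
      rw [Finset.mul_sum]
      refine Finset.sum_congr rfl fun t _ => ?_
      rw [Finset.mul_sum]
      exact Finset.sum_congr rfl fun u _ => by ring }

@[simp] theorem φ_apply (d r : S → ℝ) (M : Matrix S S ℝ) :
    φ d r M = ∑ t, ∑ u, d t * M t u * r u := rfl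

theorem key_tsum (π : S → A → ℝ) (P : S → A → S → ℝ) (R : S → A → ℝ) {γ : ℝ}
    (hγ0 : 0 < γ) (hγ1 : γ < 1)
    (hP0 : ∀ s a s', 0 ≤ P s a s') (hP1 : ∀ s a, ∑ s', P s a s' = 1)
    (hpos : ∀ s a, 0 < π s a) (hsum : ∀ s, ∑ a, π s a = 1) (d : S → ℝ) :
    ∑' k : ℕ, γ ^ k * sExpR π R ((sStep π P)^[k] d)
      = ∑ t, ∑ u, d t * (Ring.inverse (1 - γ • Wmat π P)) t u * rvec π R u := by
  have hlt : ‖γ • Wmat π P‖ < 1 := norm_smul_Wmat_lt π P hγ0 hγ1 hP0 hP1 hpos hsum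
  have hterm : ∀ k : ℕ, γ ^ k * sExpR π R ((sStep π P)^[k] d)
      = φ d (rvec π R) ((γ • Wmat π P) ^ k) := by
    intro k
    rw [sExpR_eq, sStep_iterate, φ_apply]
    calc γ ^ k * ∑ t, (∑ u, d u * (Wmat π P ^ k) u t) * rvec π R t
        = ∑ t, ∑ u, γ ^ k * (d u * (Wmat π P ^ k) u t * rvec π R t) := by
          rw [Finset.mul_sum]
          refine Finset.sum_congr rfl fun t _ => ?_
          rw [Finset.sum_mul, Finset.mul_sum]
      _ = ∑ u, ∑ t, γ ^ k * (d u * (Wmat π P ^ k) u t * rvec π R t) := Finset.sum_comm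
      _ = ∑ t, ∑ u, d t * ((γ • Wmat π P) ^ k) t u * rvec π R u := by
          refine Finset.sum_congr rfl fun u _ => Finset.sum_congr rfl fun t _ => ?_
          rw [smul_pow, Matrix.smul_apply, smul_eq_mul]
          ring
  rw [tsum_congr hterm, ← ContinuousLinearMap.map_tsum (φ d (rvec π R))
    (summable_geometric_of_norm_lt_one hlt), show (∑' z : ℕ, (γ • Wmat π P) ^ z)
      = Ring.inverse (1 - γ • Wmat π P) from geom_series_eq_inverse _ hlt, φ_apply]

theorem sV_eq (π : S → A → ℝ) (P : S → A → S → ℝ) (R : S → A → ℝ) {γ : ℝ}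
    (hγ0 : 0 < γ) (hγ1 : γ < 1)
    (hP0 : ∀ s a s', 0 ≤ P s a s') (hP1 : ∀ s a, ∑ s', P s a s' = 1)
    (hpos : ∀ s a, 0 < π s a) (hsum : ∀ s, ∑ a, π s a = 1) (s : S) :
    sV π P R γ s = ∑ u, (Ring.inverse (1 - γ • Wmat π P)) s u * rvec π R u := by
  rw [sV, key_tsum π P R hγ0 hγ1 hP0 hP1 hpos hsum (sDelta s)]
  rw [Finset.sum_comm]
  refine Finset.sum_congr rfl fun u _ => ?_
  simp [sDelta, ite_mul]

theorem sRho_eq (π : S → A → ℝ) (P : S → A → S → ℝ) {γ : ℝ}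
    (hγ0 : 0 < γ) (hγ1 : γ < 1)
    (hP0 : ∀ s a s', 0 ≤ P s a s') (hP1 : ∀ s a, ∑ s', P s a s' = 1)
    (hpos : ∀ s a, 0 < π s a) (hsum : ∀ s, ∑ a, π s a = 1) (s₀ s : S) :
    sRho π P γ s₀ s = (Ring.inverse (1 - γ • Wmat π P)) s₀ s := by
  have hlt : ‖γ • Wmat π P‖ < 1 := norm_smul_Wmat_lt π P hγ0 hγ1 hP0 hP1 hpos hsum
  let e : Matrix S S ℝ →L[ℝ] ℝ := LinearMap.toContinuousLinearMap
    { toFun := fun M => M s₀ s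
      map_add' := fun x y => rfl
      map_smul' := fun c x => rfl }
  have he : ∀ M : Matrix S S ℝ, e M = M s₀ s := fun _ => rfl
  have hterm : ∀ k : ℕ, γ ^ k * ((sStep π P)^[k] (sDelta s₀)) s
      = e ((γ • Wmat π P) ^ k) := by
    intro k
    rw [sStep_iterate, he, smul_pow, Matrix.smul_apply, smul_eq_mul]
    congr 1
    simp [sDelta, ite_mul]
  rw [sRho, tsum_congr hterm, ← ContinuousLinearMap.map_tsum e
    (summable_geometric_of_norm_lt_one hlt), show (∑' z : ℕ, (γ • Wmat π P) ^ z)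
      = Ring.inverse (1 - γ • Wmat π P) from geom_series_eq_inverse _ hlt, he]

theorem sQ_eq (π : S → A → ℝ) (P : S → A → S → ℝ) (R : S → A → ℝ) {γ : ℝ}
    (hγ0 : 0 < γ) (hγ1 : γ < 1)
    (hP0 : ∀ s a s', 0 ≤ P s a s') (hP1 : ∀ s a, ∑ s', P s a s' = 1)
    (hpos : ∀ s a, 0 < π s a) (hsum : ∀ s, ∑ a, π s a = 1) (s : S) (a : A) :
    sQ π P R γ s a = R s a + γ * ∑ t, ∑ u,
      P s a t * (Ring.inverse (1 - γ • Wmat π P)) t u * rvec π R u := by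
  rw [sQ]
  congr 1
  have : ∀ k : ℕ, γ ^ (k + 1) * sExpR π R ((sStep π P)^[k] (P s a))
      = γ * (γ ^ k * sExpR π R ((sStep π P)^[k] (P s a))) := by
    intro k; rw [pow_succ]; ring
  rw [tsum_congr this, tsum_mul_left, key_tsum π P R hγ0 hγ1 hP0 hP1 hpos hsum (P s a)]


theorem final_algebra (X : Matrix S S ℝ) (r : S → ℝ) (P : S → A → S → ℝ)
    (R : S → A → ℝ) (q : S → A → ℝ) (γ : ℝ) (s₀ : S) :
    ∑ t, (X s₀ t * ∑ a, R t a * q t a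
        + r t * (γ * ∑ s, ∑ a, q s a * (X s₀ s * ∑ v, P s a v * X v t)))
      = ∑ s, ∑ a, (X s₀ s * (R s a + γ * ∑ t, ∑ u, P s a t * X t u * r u)) * q s a := by
  have e1 : ∑ s, ∑ a, (X s₀ s * (R s a + γ * ∑ t, ∑ u, P s a t * X t u * r u)) * q s a
      = ∑ s, ∑ a, (X s₀ s * (R s a * q s a))
        + ∑ s, ∑ a, (X s₀ s * (γ * ∑ t, ∑ u, P s a t * X t u * r u)) * q s a := by
    rw [← Finset.sum_add_distrib]
    refine Finset.sum_congr rfl fun s _ => ?_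
    rw [← Finset.sum_add_distrib]
    exact Finset.sum_congr rfl fun a _ => by ring
  rw [e1, Finset.sum_add_distrib]
  congr 1
  · refine Finset.sum_congr rfl fun t _ => ?_
    rw [Finset.mul_sum]
  · simp only [Finset.mul_sum, Finset.sum_mul]
    rw [Finset.sum_comm]
    refine Finset.sum_congr rfl fun s _ => ?_
    rw [Finset.sum_comm]
    refine Finset.sum_congr rfl fun a _ => ?_
    rw [Finset.sum_comm]
    refine Finset.sum_congr rfl fun v _ => Finset.sum_congr rfl fun t _ => by ring

end PGAux

open PGAux
attribute [local instance] Matrix.linftyOpNormedRing Matrix.linftyOpNormedAlgebra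

/-- the policy gradient theorem for a finite MDP. -/
theorem policy_gradient_theorem
    {E : Type*} [NormedAddCommGroup E] [NormedSpace ℝ E]
    (π : E → S → A → ℝ) (θ₀ : E) (P : S → A → S → ℝ) (R : S → A → ℝ)
    (γ : ℝ) (hγ0 : 0 < γ) (hγ1 : γ < 1)
    (hP0 : ∀ s a s', 0 ≤ P s a s') (hP1 : ∀ s a, ∑ s', P s a s' = 1)
    (hpos : ∀ θ s a, 0 < π θ s a) (hsum : ∀ θ s, ∑ a, π θ s a = 1)
    (hdiff : ∀ s a, Differentiable ℝ (fun θ => π θ s a))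
    (s₀ : S) :
    fderiv ℝ (fun θ => sV (π θ) P R γ s₀) θ₀ =
      ∑ s, ∑ a, (sRho (π θ₀) P γ s₀ s * sQ (π θ₀) P R γ s a) •
        fderiv ℝ (fun θ => π θ s a) θ₀ := by
  classical
  set D : S → A → (E →L[ℝ] ℝ) := fun s a => fderiv ℝ (fun θ => π θ s a) θ₀ with hD
  set Msa : S → A → Matrix S S ℝ :=
    fun s a => Matrix.of fun t s' => if t = s then P s a s' else 0 with hMsa
  have hWdecomp : ∀ θ : E, Wmat (π θ) P = ∑ s, ∑ a, π θ s a • Msa s a := by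
    intro θ
    ext t s'
    simp only [Wmat, Matrix.of_apply, Matrix.sum_apply, Matrix.smul_apply, hMsa,
      smul_eq_mul, mul_ite, mul_zero]
    rw [Finset.sum_comm]
    refine Finset.sum_congr rfl fun a _ => ?_
    rw [Finset.sum_ite_eq]
    simp
  set W' : E →L[ℝ] Matrix S S ℝ := ∑ s, ∑ a, (D s a).smulRight (Msa s a) with hW'def
  have hW' : HasFDerivAt (fun θ => Wmat (π θ) P) W' θ₀ := by
    rw [show (fun θ => Wmat (π θ) P) = fun θ => ∑ s, ∑ a, π θ s a • Msa s a
      from funext hWdecomp]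
    apply HasFDerivAt.fun_sum
    intro s _
    apply HasFDerivAt.fun_sum
    intro a _
    exact ((hdiff s a).differentiableAt.hasFDerivAt).smul_const (Msa s a)
  have hlt : ‖γ • Wmat (π θ₀) P‖ < 1 :=
    norm_smul_Wmat_lt (π θ₀) P hγ0 hγ1 hP0 hP1 (hpos θ₀) (hsum θ₀)
  set u₀ : (Matrix S S ℝ)ˣ := Units.oneSub _ hlt with hu₀
  set X₀ : Matrix S S ℝ := ↑u₀⁻¹ with hX₀def
  have hX₀ : Ring.inverse ((1 : Matrix S S ℝ) - γ • Wmat (π θ₀) P) = X₀ :=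
    NormedRing.inverse_one_sub _ hlt
  have hinner : HasFDerivAt (fun θ => (1 : Matrix S S ℝ) - γ • Wmat (π θ) P)
      (-(γ • W')) θ₀ := by
    have h := (hasFDerivAt_const (1 : Matrix S S ℝ) θ₀).sub (hW'.const_smul γ)
    refine h.congr_fderiv ?_
    exact zero_sub _
  set X' : E →L[ℝ] Matrix S S ℝ :=
    (-(ContinuousLinearMap.mulLeftRight ℝ (Matrix S S ℝ) X₀ X₀)).comp (-(γ • W'))
    with hX'def
  have hXd : HasFDerivAt
      (fun θ => Ring.inverse ((1 : Matrix S S ℝ) - γ • Wmat (π θ) P)) X' θ₀ := by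
    have h1 : HasFDerivAt Ring.inverse
        (-(ContinuousLinearMap.mulLeftRight ℝ (Matrix S S ℝ) X₀ X₀))
        ((1 : Matrix S S ℝ) - γ • Wmat (π θ₀) P) := by
      have h2 := hasFDerivAt_ringInverse (𝕜 := ℝ) u₀
      have h3 : (↑u₀ : Matrix S S ℝ) = (1 : Matrix S S ℝ) - γ • Wmat (π θ₀) P := rfl
      rw [h3] at h2
      exact h2
    exact h1.comp θ₀ hinner
  set ent : S → S → (Matrix S S ℝ →L[ℝ] ℝ) := fun i j => LinearMap.toContinuousLinearMap
    { toFun := fun M => M i j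
      map_add' := fun _ _ => rfl
      map_smul' := fun _ _ => rfl } with hentdef
  have hent : ∀ (i j : S) (M : Matrix S S ℝ), ent i j M = M i j := fun _ _ _ => rfl
  set r' : S → (E →L[ℝ] ℝ) := fun t => ∑ a, R t a • D t a with hr'def
  have hr' : ∀ t, HasFDerivAt (fun θ => rvec (π θ) R t) (r' t) θ₀ := by
    intro t
    show HasFDerivAt (fun θ => ∑ a, π θ t a * R t a) (∑ a, R t a • D t a) θ₀
    apply HasFDerivAt.fun_sum
    intro a _
    exact ((hdiff t a).differentiableAt.hasFDerivAt).mul_const (R t a)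
  have hXe : ∀ t, HasFDerivAt
      (fun θ => (Ring.inverse ((1 : Matrix S S ℝ) - γ • Wmat (π θ) P)) s₀ t)
      ((ent s₀ t).comp X') θ₀ :=
    fun t => (ent s₀ t).hasFDerivAt.comp θ₀ hXd
  have hJ : HasFDerivAt (fun θ => sV (π θ) P R γ s₀)
      (∑ t, ((Ring.inverse ((1 : Matrix S S ℝ) - γ • Wmat (π θ₀) P)) s₀ t • r' t
          + rvec (π θ₀) R t • ((ent s₀ t).comp X'))) θ₀ := by
    have hfn : (fun θ => sV (π θ) P R γ s₀) = fun θ =>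
        ∑ t, (Ring.inverse ((1 : Matrix S S ℝ) - γ • Wmat (π θ) P)) s₀ t
          * rvec (π θ) R t :=
      funext fun θ => sV_eq (π θ) P R hγ0 hγ1 hP0 hP1 (hpos θ) (hsum θ) s₀
    rw [hfn]
    apply HasFDerivAt.fun_sum
    intro t _
    exact (hXe t).mul (hr' t)
  rw [hJ.fderiv]
  -- now pure algebra
  have hW'app : ∀ (h : E) (u v : S), (W' h) u v = ∑ a, D u a h * P u a v := by
    intro h u v
    simp only [hW'def, ContinuousLinearMap.sum_apply, ContinuousLinearMap.smulRight_apply,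
      Matrix.sum_apply, Matrix.smul_apply, hMsa, Matrix.of_apply, smul_eq_mul,
      mul_ite, mul_zero]
    rw [Finset.sum_comm]
    refine Finset.sum_congr rfl fun a _ => ?_
    rw [Finset.sum_ite_eq]
    simp
  have hX'app : ∀ (h : E) (t : S), (X' h) s₀ t
      = γ * ∑ s, ∑ a, D s a h * (X₀ s₀ s * ∑ v, P s a v * X₀ v t) := by
    intro h t
    have : X' h = X₀ * (γ • W' h) * X₀ := by
      show -(X₀ * (-(γ • W' h)) * X₀) = X₀ * (γ • W' h) * X₀
      rw [mul_neg, neg_mul, neg_neg]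
    rw [this]
    simp only [Matrix.mul_apply, Matrix.smul_apply, smul_eq_mul, hW'app,
      Finset.mul_sum, Finset.sum_mul]
    rw [Finset.sum_comm]
    refine Finset.sum_congr rfl fun s _ => ?_
    rw [Finset.sum_comm]
    refine Finset.sum_congr rfl fun a _ => Finset.sum_congr rfl fun v _ => by ring
  have hrho : ∀ s, sRho (π θ₀) P γ s₀ s = X₀ s₀ s := fun s => by
    rw [sRho_eq (π θ₀) P hγ0 hγ1 hP0 hP1 (hpos θ₀) (hsum θ₀) s₀ s, hX₀]
  have hq : ∀ s a, sQ (π θ₀) P R γ s a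
      = R s a + γ * ∑ t, ∑ u, P s a t * X₀ t u * rvec (π θ₀) R u := fun s a => by
    rw [sQ_eq (π θ₀) P R hγ0 hγ1 hP0 hP1 (hpos θ₀) (hsum θ₀) s a, hX₀]
  refine ContinuousLinearMap.ext fun h => ?_
  simp only [ContinuousLinearMap.sum_apply, ContinuousLinearMap.add_apply,
    ContinuousLinearMap.smul_apply, ContinuousLinearMap.coe_comp', Function.comp_apply,
    smul_eq_mul, hX₀, hrho, hq, hr'def, hent, hX'app]
  exact final_algebra X₀ (rvec (π θ₀) R) P R (fun s a => D s a h) γ s₀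


end SingleAgent
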